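/- Let L : ℝ × (ℝⁿ)^{N+1} → ℝ be smooth, q : ℝ → ℝⁿ a smooth solution of the N-th order Euler–Lagrange equation ∑_{k=0}^{N} (−1)^k (d/dt)^k ∂_{q^{(k)}} L = 0, and q_λ(t) a smooth family with q_0 = q. Suppose there is μ ∈ ℝ with ∂_λ L(t, q_λ(t), …, q_λ⁽ᴺ⁾(t))|_{λ=0} = μ for all t. Then t ↦ ∑_{i=1}^N ∑_{k=0}^{i−1} (−1)^k (d/dt)^k[∂_{q^{(i)}} L] · ∂_λ q_λ^{(i−k−1)}(t)|_{λ=0} − μ t is constant in t. -/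

import Mathlib

open scoped RealInnerProductSpace

/-- The gradient of an `N`-th order Lagrangian `L(t, q, q⁽¹⁾, …, q⁽ᴺ⁾)` with
respect to its block argument `q⁽ⁱ⁾`, evaluated along the motion `q` at time `t`. -/
noncomputable def pgrad {n N : ℕ}
    (L : ℝ → (Fin (N + 1) → EuclideanSpace ℝ (Fin n)) → ℝ)
    (q : ℝ → EuclideanSpace ℝ (Fin n)) (i : Fin (N + 1)) (t : ℝ) :
    EuclideanSpace ℝ (Fin n) :=
  gradient
    (fun y => L t (Function.update (fun j : Fin (N + 1) => iteratedDeriv (j : ℕ) q t) i y))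
    (iteratedDeriv (i : ℕ) q t)


lemma inf1 : ((⊤:ℕ∞) : WithTop ℕ∞) ≠ 0 := by simp

lemma inf2 : minSmoothness ℝ 2 ≤ ((⊤:ℕ∞) : WithTop ℕ∞) := by
  rw [minSmoothness_of_isRCLikeNormedField]
  rw [show ((2:WithTop ℕ∞)) = (((2:ℕ∞)):WithTop ℕ∞) by norm_cast]
  exact_mod_cast le_top

lemma infS : ((⊤:ℕ∞) : WithTop ℕ∞) + 1 ≤ ((⊤:ℕ∞) : WithTop ℕ∞) := by exact_mod_cast le_top


variable {E : Type*} [NormedAddCommGroup E] [NormedSpace ℝ E]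

lemma pd_hasDerivAt_snd {f : ℝ × ℝ → E} (hf : ContDiff ℝ (⊤ : ℕ∞) f) (p : ℝ × ℝ) :
    HasDerivAt (fun y => f (p.1, y)) (fderiv ℝ f p (0, 1)) p.2 := by
  have h1 := (hf.differentiable inf1 p).hasFDerivAt
  have h2 : HasDerivAt (fun y : ℝ => (p.1, y)) ((0 : ℝ), (1 : ℝ)) p.2 :=
    (hasDerivAt_const _ _).prodMk (hasDerivAt_id _)
  simpa [Function.comp_def] using h1.comp_hasDerivAt p.2 h2

lemma pd_hasDerivAt_fst {f : ℝ × ℝ → E} (hf : ContDiff ℝ (⊤ : ℕ∞) f) (p : ℝ × ℝ) :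
    HasDerivAt (fun x => f (x, p.2)) (fderiv ℝ f p (1, 0)) p.1 := by
  have h1 := (hf.differentiable inf1 p).hasFDerivAt
  have h2 : HasDerivAt (fun x : ℝ => (x, p.2)) ((1 : ℝ), (0 : ℝ)) p.1 :=
    (hasDerivAt_id _).prodMk (hasDerivAt_const _ _)
  simpa [Function.comp_def] using h1.comp_hasDerivAt p.1 h2

lemma pd_smooth {f : ℝ × ℝ → E} (hf : ContDiff ℝ (⊤ : ℕ∞) f) (w : ℝ × ℝ) :
    ContDiff ℝ (⊤ : ℕ∞) (fun p => fderiv ℝ f p w) :=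
  (hf.fderiv_right infS).clm_apply contDiff_const

lemma pd_swap {f : ℝ × ℝ → E} (hf : ContDiff ℝ (⊤ : ℕ∞) f) (a b : ℝ) :
    deriv (fun x => deriv (fun y => f (x, y)) b) a
      = deriv (fun y => deriv (fun x => f (x, y)) a) b := by
  have hsymm : IsSymmSndFDerivAt ℝ f (a, b) :=
    (hf.contDiffAt).isSymmSndFDerivAt inf2
  have hg : Differentiable ℝ (fderiv ℝ f) := (hf.fderiv_right infS).differentiable inf1
  have key : ∀ u v : ℝ × ℝ,
      HasDerivAt (fun x : ℝ => fderiv ℝ f (x, b) v) (fderiv ℝ (fderiv ℝ f) (a, b) (1, 0) v) a ∧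
      HasDerivAt (fun y : ℝ => fderiv ℝ f (a, y) v) (fderiv ℝ (fderiv ℝ f) (a, b) (0, 1) v) b := by
    intro u v
    constructor
    · have h2 : HasDerivAt (fun x : ℝ => ((x : ℝ), b)) ((1 : ℝ), (0 : ℝ)) a :=
        (hasDerivAt_id _).prodMk (hasDerivAt_const _ _)
      have := ((hg (a, b)).hasFDerivAt.comp_hasDerivAt a h2)
      simpa [Function.comp_def] using ((ContinuousLinearMap.apply ℝ E v).hasFDerivAt.comp_hasDerivAt a this)
    · have h2 : HasDerivAt (fun y : ℝ => (a, (y : ℝ))) ((0 : ℝ), (1 : ℝ)) b :=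
        (hasDerivAt_const _ _).prodMk (hasDerivAt_id _)
      have := ((hg (a, b)).hasFDerivAt.comp_hasDerivAt b h2)
      simpa [Function.comp_def] using ((ContinuousLinearMap.apply ℝ E v).hasFDerivAt.comp_hasDerivAt b this)
  have e1 : (fun x : ℝ => deriv (fun y => f (x, y)) b) = fun x => fderiv ℝ f (x, b) (0, 1) := by
    funext x; exact (pd_hasDerivAt_snd hf (x, b)).deriv
  have e2 : (fun y : ℝ => deriv (fun x => f (x, y)) a) = fun y => fderiv ℝ f (a, y) (1, 0) := by
    funext y; exact (pd_hasDerivAt_fst hf (a, y)).deriv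
  rw [e1, e2, ((key (1,0) (0,1)).1).deriv, ((key (0,1) (1,0)).2).deriv]
  exact hsymm (1, 0) (0, 1)

lemma pd_snd_smooth {f : ℝ × ℝ → E} (hf : ContDiff ℝ (⊤ : ℕ∞) f) :
    ContDiff ℝ (⊤ : ℕ∞) (fun p : ℝ × ℝ => deriv (fun y => f (p.1, y)) p.2) := by
  have h : (fun p : ℝ × ℝ => deriv (fun y => f (p.1, y)) p.2)
      = fun p => fderiv ℝ f p (0, 1) := funext fun p => (pd_hasDerivAt_snd hf p).deriv
  rw [h]; exact pd_smooth hf _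

lemma pd_fst_smooth {f : ℝ × ℝ → E} (hf : ContDiff ℝ (⊤ : ℕ∞) f) :
    ContDiff ℝ (⊤ : ℕ∞) (fun p : ℝ × ℝ => deriv (fun x => f (x, p.2)) p.1) := by
  have h : (fun p : ℝ × ℝ => deriv (fun x => f (x, p.2)) p.1)
      = fun p => fderiv ℝ f p (1, 0) := funext fun p => (pd_hasDerivAt_fst hf p).deriv
  rw [h]; exact pd_smooth hf _

lemma iter_smooth {Q : ℝ → ℝ → E} (hQ : ContDiff ℝ (⊤ : ℕ∞) (fun p : ℝ × ℝ => Q p.1 p.2))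
    (m : ℕ) : ContDiff ℝ (⊤ : ℕ∞) (fun p : ℝ × ℝ => iteratedDeriv m (Q p.1) p.2) := by
  induction m with
  | zero => simpa [iteratedDeriv_zero] using hQ
  | succ m ih =>
    have h : (fun p : ℝ × ℝ => iteratedDeriv (m + 1) (Q p.1) p.2)
        = fun p : ℝ × ℝ =>
            deriv (fun y => (fun r : ℝ × ℝ => iteratedDeriv m (Q r.1) r.2) (p.1, y)) p.2 := by
      funext p; rw [iteratedDeriv_succ]
    rw [h]; exact pd_snd_smooth ih

lemma swap_iter {Q : ℝ → ℝ → E} (hQ : ContDiff ℝ (⊤ : ℕ∞) (fun p : ℝ × ℝ => Q p.1 p.2))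
    (m : ℕ) (t : ℝ) :
    deriv (fun l => iteratedDeriv m (Q l) t) 0
      = iteratedDeriv m (fun s => deriv (fun l => Q l s) 0) t := by
  induction m generalizing t with
  | zero => simp [iteratedDeriv_zero]
  | succ m ih =>
    have hG := iter_smooth hQ m
    have h1 : (fun l => iteratedDeriv (m + 1) (Q l) t)
        = fun l => deriv (fun y => (fun r : ℝ × ℝ => iteratedDeriv m (Q r.1) r.2) (l, y)) t := by
      funext l; rw [iteratedDeriv_succ]
    rw [h1, pd_swap hG 0 t, iteratedDeriv_succ]
    congr 1
    funext y
    exact ih y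

lemma v_smooth {Q : ℝ → ℝ → E} (hQ : ContDiff ℝ (⊤ : ℕ∞) (fun p : ℝ × ℝ => Q p.1 p.2)) :
    ContDiff ℝ (⊤ : ℕ∞) (fun s => deriv (fun l => Q l s) 0) := by
  have h := pd_fst_smooth hQ
  have := h.comp ((contDiff_const (c := (0:ℝ))).prodMk contDiff_id)
  simpa [Function.comp_def] using this

open scoped RealInnerProductSpace


section Lag

variable {n N : ℕ}

local notation "EE" => EuclideanSpace ℝ (Fin n)
local notation "FF" => (Fin (N + 1) → EuclideanSpace ℝ (Fin n))

/-- the jet of `q` -/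
noncomputable def Xjet (N : ℕ) (q : ℝ → EuclideanSpace ℝ (Fin n)) (t : ℝ) :
    Fin (N + 1) → EuclideanSpace ℝ (Fin n) :=
  fun j : Fin (N + 1) => iteratedDeriv (j : ℕ) q t

lemma iteratedDeriv_smooth {u : ℝ → EE} (hu : ContDiff ℝ (⊤ : ℕ∞) u) (m : ℕ) :
    ContDiff ℝ (⊤ : ℕ∞) (iteratedDeriv m u) := by
  rw [iteratedDeriv_eq_iterate]
  exact hu.iterate_deriv m

lemma Xjet_smooth {q : ℝ → EE} (hq : ContDiff ℝ (⊤ : ℕ∞) q) :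
    ContDiff ℝ (⊤ : ℕ∞) (Xjet N q) :=
  contDiff_pi.mpr fun j => iteratedDeriv_smooth hq (j : ℕ)

lemma Lt_smooth {L : ℝ → FF → ℝ} (hL : ContDiff ℝ (⊤ : ℕ∞) (fun p : ℝ × FF => L p.1 p.2))
    (t : ℝ) : ContDiff ℝ (⊤ : ℕ∞) (fun x : FF => L t x) :=
  hL.comp ((contDiff_const (c := t)).prodMk contDiff_id)

/-- key pairing identity -/
lemma pgrad_pair {L : ℝ → FF → ℝ} (hL : ContDiff ℝ (⊤ : ℕ∞) (fun p : ℝ × FF => L p.1 p.2))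
    {q : ℝ → EE} (t : ℝ) (i : Fin (N + 1)) (w : EE) :
    ⟪pgrad L q i t, w⟫ = fderiv ℝ (fun x : FF => L t x) (Xjet N q t) (Pi.single i w) := by
  have hupd : HasFDerivAt (Function.update (Xjet N q t) i)
      (ContinuousLinearMap.pi (Pi.single i (ContinuousLinearMap.id ℝ EE)))
      (Xjet N q t i) := hasFDerivAt_update _ _
  have hLt : HasFDerivAt (fun x : FF => L t x)
      (fderiv ℝ (fun x : FF => L t x) (Xjet N q t))
      (Function.update (Xjet N q t) i (Xjet N q t i)) := by
    rw [Function.update_eq_self]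
    exact ((Lt_smooth hL t).differentiable inf1 (Xjet N q t)).hasFDerivAt
  have hcomp : HasFDerivAt (fun y : EE => L t (Function.update (Xjet N q t) i y))
      ((fderiv ℝ (fun x : FF => L t x) (Xjet N q t)).comp
        (ContinuousLinearMap.pi (Pi.single i (ContinuousLinearMap.id ℝ EE))))
      (Xjet N q t i) := hLt.comp (Xjet N q t i) hupd
  have hder : pgrad L q i t = (InnerProductSpace.toDual ℝ EE).symm
      (fderiv ℝ (fun y : EE => L t (Function.update (Xjet N q t) i y)) (Xjet N q t i)) := rfl
  rw [hder, InnerProductSpace.toDual_symm_apply, hcomp.fderiv]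
  simp only [ContinuousLinearMap.coe_comp', Function.comp_apply, ContinuousLinearMap.pi_apply]
  congr 1
  funext j
  by_cases h : j = i
  · subst h; simp
  · simp [Pi.single_apply, h]

/-- chain rule through the jet -/
lemma chain_rule {L : ℝ → FF → ℝ} (hL : ContDiff ℝ (⊤ : ℕ∞) (fun p : ℝ × FF => L p.1 p.2))
    {q : ℝ → EE} (t : ℝ) {c : ℝ → FF} {c' : FF} (hc : HasDerivAt c c' 0)
    (hc0 : c 0 = Xjet N q t) :
    HasDerivAt (fun l => L t (c l)) (∑ i : Fin (N + 1), ⟪pgrad L q i t, c' i⟫) 0 := by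
  have hLt : HasFDerivAt (fun x : FF => L t x)
      (fderiv ℝ (fun x : FF => L t x) (Xjet N q t)) (c 0) := by
    rw [hc0]
    exact ((Lt_smooth hL t).differentiable inf1 (Xjet N q t)).hasFDerivAt
  have h := hLt.comp_hasDerivAt 0 hc
  refine h.congr_deriv ?_; symm
  have hsum : c' = ∑ i : Fin (N + 1), Pi.single i (c' i) := (Finset.univ_sum_single c').symm
  conv_rhs => rw [hsum]
  rw [map_sum]
  exact Finset.sum_congr rfl fun i _ => pgrad_pair hL t i (c' i)

lemma Upi_apply {n N : ℕ} (i : Fin (N + 1)) (w : EuclideanSpace ℝ (Fin n)) :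
    (ContinuousLinearMap.pi
      (Pi.single i (ContinuousLinearMap.id ℝ (EuclideanSpace ℝ (Fin n)))
        : ∀ _ : Fin (N + 1), EuclideanSpace ℝ (Fin n) →L[ℝ] EuclideanSpace ℝ (Fin n))) w
      = Pi.single i w := by
  funext j
  by_cases h : j = i
  · subst h; simp
  · simp [Pi.single_apply, h]

lemma pgrad_smooth {L : ℝ → FF → ℝ} (hL : ContDiff ℝ (⊤ : ℕ∞) (fun p : ℝ × FF => L p.1 p.2))
    {q : ℝ → EE} (hq : ContDiff ℝ (⊤ : ℕ∞) q) (i : Fin (N + 1)) :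
    ContDiff ℝ (⊤ : ℕ∞) (pgrad L q i) := by
  have hD : ContDiff ℝ (⊤ : ℕ∞) (fun t : ℝ => fderiv ℝ (fun x : FF => L t x) (Xjet N q t)) :=
    ContDiff.fderiv (f := fun t (x : FF) => L t x) (g := Xjet N q) hL (Xjet_smooth hq) infS
  have hcomp : ContDiff ℝ (⊤ : ℕ∞) (fun t : ℝ =>
      (fderiv ℝ (fun x : FF => L t x) (Xjet N q t)).comp
        (ContinuousLinearMap.pi (Pi.single i (ContinuousLinearMap.id ℝ EE)))) :=
    hD.clm_comp contDiff_const
  have heq : pgrad L q i = fun t =>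
      (InnerProductSpace.toDual ℝ EE).symm
        ((fderiv ℝ (fun x : FF => L t x) (Xjet N q t)).comp
          (ContinuousLinearMap.pi (Pi.single i (ContinuousLinearMap.id ℝ EE)))) := by
    funext t
    refine ext_inner_right ℝ fun w => ?_
    rw [pgrad_pair hL t i w, InnerProductSpace.toDual_symm_apply]
    simp only [ContinuousLinearMap.coe_comp', Function.comp_apply]
    rw [Upi_apply]
  rw [heq]
  exact ((InnerProductSpace.toDual ℝ EE).symm.contDiff).comp hcomp

end Lag

lemma hasDerivAt_iter {n : ℕ} {u : ℝ → EuclideanSpace ℝ (Fin n)}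
    (hu : ContDiff ℝ (⊤ : ℕ∞) u) (m : ℕ) (t : ℝ) :
    HasDerivAt (iteratedDeriv m u) (iteratedDeriv (m + 1) u t) t := by
  rw [iteratedDeriv_succ]
  exact ((iteratedDeriv_smooth hu m).differentiable inf1 t).hasDerivAt


/-- If along a family of perturbed motions `∂_λ L|_{λ=0} ≡ μ` is constant, then
`∑_{i=1}^N ∑_{k=0}^{i−1} (−1)^k (d/dt)^k[∂_{q⁽ⁱ⁾}L] · ∂_λ q_λ⁽ⁱ⁻ᵏ⁻¹⁾|_{λ=0} − μ t`
is a first integral. -/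
theorem stmt_15 {n N : ℕ}
    (L : ℝ → (Fin (N + 1) → EuclideanSpace ℝ (Fin n)) → ℝ)
    (hL : ContDiff ℝ (⊤ : ℕ∞)
      (fun p : ℝ × (Fin (N + 1) → EuclideanSpace ℝ (Fin n)) => L p.1 p.2))
    (q : ℝ → EuclideanSpace ℝ (Fin n)) (hq : ContDiff ℝ (⊤ : ℕ∞) q)
    (hEL : ∀ t : ℝ,
      ∑ k : Fin (N + 1), ((-1 : ℝ) ^ (k : ℕ)) • iteratedDeriv (k : ℕ) (pgrad L q k) t = 0)
    (Q : ℝ → ℝ → EuclideanSpace ℝ (Fin n))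
    (hQ : ContDiff ℝ (⊤ : ℕ∞) (fun p : ℝ × ℝ => Q p.1 p.2))
    (hQ0 : Q 0 = q)
    (μ : ℝ)
    (hμ : ∀ t : ℝ,
      deriv (fun l => L t (fun i : Fin (N + 1) => iteratedDeriv (i : ℕ) (Q l) t)) 0 = μ) :
    ∃ c : ℝ, ∀ t : ℝ,
      (∑ i : Fin (N + 1), ∑ k ∈ Finset.range (i : ℕ),
        (-1 : ℝ) ^ k *
          ⟪iteratedDeriv k (pgrad L q i) t,
            deriv (fun l => iteratedDeriv ((i : ℕ) - k - 1) (Q l) t) 0⟫)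
      - μ * t = c := by
  classical
  set v : ℝ → EuclideanSpace ℝ (Fin n) := fun s => deriv (fun l => Q l s) 0 with hv_def
  have hv : ContDiff ℝ (⊤ : ℕ∞) v := v_smooth hQ
  set S : ℝ → ℝ := fun t => ∑ i : Fin (N + 1), ∑ k ∈ Finset.range (i : ℕ),
    (-1 : ℝ) ^ k *
      ⟪iteratedDeriv k (pgrad L q i) t, iteratedDeriv ((i : ℕ) - k - 1) v t⟫ with hS_def
  -- the original integrand equals S
  have hSeq : ∀ t : ℝ,
      (∑ i : Fin (N + 1), ∑ k ∈ Finset.range (i : ℕ),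
        (-1 : ℝ) ^ k *
          ⟪iteratedDeriv k (pgrad L q i) t,
            deriv (fun l => iteratedDeriv ((i : ℕ) - k - 1) (Q l) t) 0⟫) = S t := by
    intro t
    refine Finset.sum_congr rfl fun i _ => Finset.sum_congr rfl fun k _ => ?_
    rw [swap_iter hQ]
  -- S has derivative μ everywhere
  have hSd : ∀ t : ℝ, HasDerivAt S μ t := by
    intro t
    -- inner telescoping summand `C`
    set C : Fin (N + 1) → ℕ → ℝ := fun i k =>
      (-1 : ℝ) ^ k *
        ⟪iteratedDeriv k (pgrad L q i) t, iteratedDeriv ((i : ℕ) - k) v t⟫ with hC_def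
    have hterm : ∀ (i : Fin (N + 1)), ∀ k ∈ Finset.range (i : ℕ),
        HasDerivAt (fun s => (-1 : ℝ) ^ k *
            ⟪iteratedDeriv k (pgrad L q i) s, iteratedDeriv ((i : ℕ) - k - 1) v s⟫)
          (C i k - C i (k + 1)) t := by
      intro i k hk
      rw [Finset.mem_range] at hk
      have h1 : (i : ℕ) - k - 1 + 1 = (i : ℕ) - k := by omega
      have hin := HasDerivAt.inner ℝ
        (hasDerivAt_iter (pgrad_smooth hL hq i) k t)
        (hasDerivAt_iter hv ((i : ℕ) - k - 1) t)
      have := hin.const_mul ((-1 : ℝ) ^ k)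
      refine this.congr_deriv ?_; symm
      rw [hC_def]
      simp only [h1]
      have h2 : (i : ℕ) - (k + 1) = (i : ℕ) - k - 1 := by omega
      rw [h2]
      ring
    have hsum : HasDerivAt S (∑ i : Fin (N + 1), (C i 0 - C i (i : ℕ))) t := by
      have h := HasDerivAt.fun_sum (u := (Finset.univ : Finset (Fin (N + 1))))
        (fun i _ => HasDerivAt.fun_sum (hterm i))
      refine h.congr_deriv ?_; symm
      refine Finset.sum_congr rfl fun i _ => ?_
      exact (Finset.sum_range_sub' (C i) (i : ℕ)).symm
    -- ∑ C i 0 = μ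
    have hμ' : (∑ i : Fin (N + 1), C i 0) = μ := by
      have hc : HasDerivAt
          (fun l => fun j : Fin (N + 1) => iteratedDeriv (j : ℕ) (Q l) t)
          (fun j : Fin (N + 1) => iteratedDeriv (j : ℕ) v t) 0 := by
        refine hasDerivAt_pi.mpr fun j => ?_
        have h := pd_hasDerivAt_fst (iter_smooth hQ (j : ℕ)) (0, t)
        have h2 := swap_iter hQ (j : ℕ) t
        rw [← h2]
        exact hasDerivAt_deriv_iff.mpr h.differentiableAt
      have hc0 : (fun j : Fin (N + 1) => iteratedDeriv (j : ℕ) (Q 0) t) = Xjet N q t := by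
        rw [hQ0]; rfl
      have hch : HasDerivAt
          (fun l => L t (fun j : Fin (N + 1) => iteratedDeriv (j : ℕ) (Q l) t))
          (∑ i : Fin (N + 1), ⟪pgrad L q i t, iteratedDeriv (i : ℕ) v t⟫) 0 :=
        chain_rule hL t hc hc0
      have := hch.deriv
      rw [hμ t] at this
      rw [hC_def]
      simp only [pow_zero, one_mul, Nat.sub_zero, iteratedDeriv_zero]
      exact this.symm
    -- ∑ C i i = 0
    have hEL' : (∑ i : Fin (N + 1), C i (i : ℕ)) = 0 := by
      have h := hEL t
      have h2 : ⟪∑ k : Fin (N + 1),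
          ((-1 : ℝ) ^ (k : ℕ)) • iteratedDeriv (k : ℕ) (pgrad L q k) t, v t⟫ = 0 := by
        rw [h]; simp
      rw [sum_inner] at h2
      rw [hC_def]
      simp only [Nat.sub_self, iteratedDeriv_zero]
      rw [← h2]
      refine Finset.sum_congr rfl fun i _ => ?_
      rw [real_inner_smul_left]
    have : (∑ i : Fin (N + 1), (C i 0 - C i (i : ℕ))) = μ := by
      rw [Finset.sum_sub_distrib, hμ', hEL']
      ring
    rwa [this] at hsum
  -- conclude
  have hfd : ∀ t : ℝ, HasDerivAt (fun t => S t - μ * t) 0 t := by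
    intro t
    have := (hSd t).sub ((hasDerivAt_id t).const_mul μ)
    simpa [Pi.sub_def] using this
  refine ⟨S 0 - μ * 0, fun t => ?_⟩
  rw [hSeq t]
  exact is_const_of_deriv_eq_zero (fun s => (hfd s).differentiableAt)
    (fun s => (hfd s).deriv) t 0
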